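/- arXiv:0706.3021 — 8 statements merged into one kernel-verified Lean document; each statement's English description precedes it below -/
import Mathlib

section
/- If G is a torsion-free group that is virtually cyclic (i.e., has a cyclic subgroup of finite index), then G is cyclic. -/
open Subgroup

lemma aux_isCyclic_of_injective {G H : Type*} [Group G] [Group H] [IsCyclic H]
    (f : G →* H) (hf : Function.Injective f) : IsCyclic G := by
  haveI : IsCyclic f.range := Subgroup.isCyclic _
  exact isCyclic_of_surjective (MulEquiv.symm (MonoidHom.ofInjective hf)).toMonoidHom
    (MulEquiv.surjective _)

lemma aux_gen {G : Type*} [Group G] (N : Subgroup G) [IsCyclic N] :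
    ∃ g : G, N = Subgroup.zpowers g := by
  obtain ⟨⟨g, hgN⟩, hgen⟩ := IsCyclic.exists_generator (α := N)
  refine ⟨g, le_antisymm ?_ ?_⟩
  · intro x hx
    obtain ⟨k, hk⟩ := hgen ⟨x, hx⟩
    exact ⟨k, congrArg Subtype.val hk⟩
  · exact Subgroup.zpowers_le.mpr hgN

lemma aux_pm {G : Type*} [Group G] {c t : G} (hc : ¬IsOfFinOrder c)
    (h1 : t * c * t⁻¹ ∈ Subgroup.zpowers c) (h2 : t⁻¹ * c * t ∈ Subgroup.zpowers c) :
    t * c * t⁻¹ = c ∨ t * c * t⁻¹ = c⁻¹ := by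
  have hinj : Function.Injective fun n : ℤ => c ^ n :=
    injective_zpow_iff_not_isOfFinOrder.mpr hc
  obtain ⟨n, hn⟩ := h1
  obtain ⟨m, hm⟩ := h2
  simp only at hn hm
  have key : c ^ (n * m) = c ^ (1 : ℤ) := by
    rw [zpow_one, zpow_mul]
    calc (c ^ n) ^ m = (t * c * t⁻¹) ^ m := by rw [hn]
    _ = t * c ^ m * t⁻¹ := by rw [conj_zpow]
    _ = t * (t⁻¹ * c * t) * t⁻¹ := by rw [hm]
    _ = c := by group
  have hmn : n * m = 1 := hinj key
  rcases Int.eq_one_or_neg_one_of_mul_eq_one hmn with h | h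
  · left; rw [← hn, h, zpow_one]
  · right; rw [← hn, h, zpow_neg_one]

/-- The Mathlib (Dec 2024) definition, removed since: a monoid is torsion-free if no
nontrivial element has finite order. -/
def Monoid.IsTorsionFree (G : Type*) [Monoid G] : Prop :=
  ∀ g : G, g ≠ 1 → ¬IsOfFinOrder g

/-- A torsion-free virtually cyclic group is cyclic. -/
theorem torsionFree_virtuallyCyclic_isCyclic (G : Type*) [Group G]
    (htf : Monoid.IsTorsionFree G)
    (H : Subgroup G) (hcyc : IsCyclic H) (hfi : H.FiniteIndex) :
    IsCyclic G := by
  classical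
  cases finite_or_infinite G with
  | inl hfin =>
    refine ⟨1, fun x => ?_⟩
    have hx1 : x = 1 := by
      by_contra hx
      exact htf x hx (isOfFinOrder_of_finite x)
    exact ⟨0, by simp [hx1]⟩
  | inr hinf =>
    -- normal core
    set N := H.normalCore with hNdef
    haveI : N.Normal := H.normalCore_normal
    haveI hNfi : N.FiniteIndex := Subgroup.finiteIndex_normalCore H
    haveI : IsCyclic N := Subgroup.isCyclic_of_le H.normalCore_le
    obtain ⟨g, hNg⟩ := aux_gen N
    -- N is infinite, g has infinite order
    haveI hNinf : Infinite N := by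
      by_contra hfinN
      rw [not_infinite_iff_finite] at hfinN
      haveI := hfinN
      haveI : Finite G :=
        Finite.of_equiv _ (Subgroup.groupEquivQuotientProdSubgroup (s := N)).symm
      exact not_finite G
    have hg1 : g ≠ 1 := by
      rintro rfl
      haveI : Finite N := by rw [hNg, Subgroup.zpowers_one_eq_bot]; infer_instance
      exact not_finite N
    have hgord : ¬IsOfFinOrder g := htf g hg1
    -- conjugation sends g to g or g⁻¹
    have hgm : g ∈ N := hNg ▸ Subgroup.mem_zpowers g
    have hconj : ∀ x : G, x * g * x⁻¹ = g ∨ x * g * x⁻¹ = g⁻¹ := by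
      intro x
      refine aux_pm hgord ?_ ?_
      · rw [← hNg]; exact Subgroup.Normal.conj_mem ‹N.Normal› g hgm x
      · rw [← hNg]
        simpa using Subgroup.Normal.conj_mem ‹N.Normal› g hgm x⁻¹
    -- K = centralizer of g
    set K := Subgroup.centralizer {g} with hKdef
    have hmemK : ∀ x : G, x ∈ K ↔ g * x = x * g := by
      intro x
      simp [hKdef, Subgroup.mem_centralizer_iff]
    have hNK : N ≤ K := by
      rw [hNg]
      intro x hx
      obtain ⟨k, hk⟩ := hx
      rw [hmemK, ← hk]
      exact (Commute.zpow_right (Commute.refl g) k)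
    -- K is torsion-free as a group
    have hKtf : ∀ x : K, x ≠ 1 → ¬IsOfFinOrder x := by
      intro x hx hord
      have hne : (x : G) ≠ 1 := fun h => hx (Subtype.ext h)
      exact htf (x : G) hne (K.subtype.isOfFinOrder hord)
    -- center of K has finite index
    haveI : (N.subgroupOf K).FiniteIndex := Subgroup.instFiniteIndex_subgroupOf N K
    have hcentle : N.subgroupOf K ≤ Subgroup.center K := by
      rintro ⟨x, hxK⟩ hx
      rw [Subgroup.mem_center_iff]
      rintro ⟨y, hyK⟩
      have hxN : x ∈ N := hx
      rw [hNg] at hxN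
      obtain ⟨k, hk⟩ := hxN
      have : y * x = x * y := by
        rw [← hk]
        exact (Commute.zpow_right ((hmemK y).mp hyK).symm k)
      exact Subtype.ext this
    haveI : (Subgroup.center K).FiniteIndex := Subgroup.finiteIndex_of_le hcentle
    -- K is abelian via the transfer homomorphism
    have hKcomm : ∀ a b : K, a * b = b * a := by
      have hinj : Function.Injective (MonoidHom.transferCenterPow K) := by
        intro a b hab
        by_contra hne
        have h0 : MonoidHom.transferCenterPow K (a * b⁻¹) = 1 := by
          rw [map_mul, map_inv, hab, mul_inv_cancel]
        have h1 : (a * b⁻¹) ^ (Subgroup.center K).index = 1 := by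
          have := congrArg (Subtype.val) h0
          rwa [MonoidHom.transferCenterPow_apply, OneMemClass.coe_one] at this
        have hne1 : a * b⁻¹ ≠ 1 := by
          intro h; exact hne (mul_inv_eq_one.mp h)
        exact hKtf (a * b⁻¹) hne1 (isOfFinOrder_iff_pow_eq_one.mpr
          ⟨(Subgroup.center K).index,
            Nat.pos_of_ne_zero Subgroup.FiniteIndex.index_ne_zero, h1⟩)
      intro a b
      apply hinj
      rw [map_mul, map_mul]
      exact Subtype.ext (Subgroup.mem_center_iff.mp (MonoidHom.transferCenterPow K b).2 _)
    -- K is cyclic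
    letI : CommGroup K := { (inferInstance : Group K) with mul_comm := hKcomm }
    haveI : IsCyclic (N.subgroupOf K) :=
      isCyclic_of_surjective (Subgroup.subgroupOfEquivOfLe hNK).symm.toMonoidHom
        (MulEquiv.surjective _)
    haveI : (N.subgroupOf K).Normal := inferInstance
    haveI : IsCyclic K := by
      set n := (N.subgroupOf K).index with hn
      have hn0 : n ≠ 0 := Subgroup.FiniteIndex.index_ne_zero
      let f : K →* (N.subgroupOf K) :=
        { toFun := fun x => ⟨x ^ n, Subgroup.pow_index_mem _ x⟩
          map_one' := by ext; simp
          map_mul' := fun a b => by ext; simp [mul_pow] }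
      have finj : Function.Injective f := by
        intro a b hab
        have h1 : (a * b⁻¹) ^ n = 1 := by
          have habv : a ^ n = b ^ n := congrArg Subtype.val hab
          rw [mul_pow, habv, inv_pow, mul_inv_cancel]
        by_contra hne
        have hne1 : a * b⁻¹ ≠ 1 := fun h => hne (mul_inv_eq_one.mp h)
        exact hKtf (a * b⁻¹) hne1 (isOfFinOrder_iff_pow_eq_one.mpr
          ⟨n, Nat.pos_of_ne_zero hn0, h1⟩)
      exact aux_isCyclic_of_injective f finj
    obtain ⟨c, hKc⟩ := aux_gen K
    -- facts about c
    have hcK : c ∈ K := by rw [hKc]; exact Subgroup.mem_zpowers c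
    have hgc : g ∈ Subgroup.zpowers c := by rw [← hKc]; exact (hmemK g).mpr rfl
    obtain ⟨k, hk⟩ := hgc
    simp only at hk
    have hc1 : c ≠ 1 := by
      rintro rfl
      rw [one_zpow] at hk
      exact hg1 hk.symm
    have hcord : ¬IsOfFinOrder c := htf c hc1
    -- K is normal in G
    have hKnormal : ∀ x : G, x ∈ K → ∀ t : G, t * x * t⁻¹ ∈ K := by
      intro x hx t
      have hCx : Commute g x := (hmemK x).mp hx
      rw [hmemK]
      rcases hconj t⁻¹ with h | h <;> rw [inv_inv] at h
      · calc g * (t * x * t⁻¹)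
            = t * ((t⁻¹ * g * t) * x) * t⁻¹ := by group
          _ = t * (g * x) * t⁻¹ := by rw [h]
          _ = t * (x * g) * t⁻¹ := by rw [hCx.eq]
          _ = t * (x * (t⁻¹ * g * t)) * t⁻¹ := by rw [h]
          _ = (t * x * t⁻¹) * g := by group
      · calc g * (t * x * t⁻¹)
            = t * ((t⁻¹ * g * t) * x) * t⁻¹ := by group
          _ = t * (g⁻¹ * x) * t⁻¹ := by rw [h]
          _ = t * (x * g⁻¹) * t⁻¹ := by rw [hCx.inv_left.eq]
          _ = t * (x * (t⁻¹ * g * t)) * t⁻¹ := by rw [h]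
          _ = (t * x * t⁻¹) * g := by group
    -- every element is in K = zpowers c
    refine ⟨c, fun t => ?_⟩
    suffices ht : t ∈ K by rw [hKc] at ht; exact ht
    by_contra htK
    have htg : t * g * t⁻¹ = g⁻¹ := by
      rcases hconj t with h | h
      · exfalso
        apply htK
        rw [hmemK]
        rw [mul_inv_eq_iff_eq_mul] at h
        exact h.symm
      · exact h
    have h1 : t * c * t⁻¹ ∈ Subgroup.zpowers c := by
      rw [← hKc]; exact hKnormal c hcK t
    have h2 : t⁻¹ * c * t ∈ Subgroup.zpowers c := by
      rw [← hKc]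
      simpa using hKnormal c hcK t⁻¹
    rcases aux_pm hcord h1 h2 with h | h
    · -- t commutes with c, hence with g : contradiction with t ∉ K
      apply htK
      rw [hmemK]
      have htc : Commute t c := by
        rw [mul_inv_eq_iff_eq_mul] at h
        exact h
      have : Commute t g := by
        rw [← hk]
        exact htc.zpow_right k
      exact this.symm.eq
    · -- t inverts c; derive t² = 1, contradiction with torsion-freeness
      have htginv : t⁻¹ * g * t = g⁻¹ := by
        have h' : t⁻¹ * g⁻¹ * t = g := by rw [← htg]; group
        calc t⁻¹ * g * t = (t⁻¹ * g⁻¹ * t)⁻¹ := by group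
          _ = g⁻¹ := by rw [h']
      have ht2 : t * t ∈ K := by
        rw [hmemK]
        calc g * (t * t) = t * (t⁻¹ * g * t) * t := by group
          _ = t * g⁻¹ * t := by rw [htginv]
          _ = (t * t) * (t⁻¹ * g⁻¹ * t) := by group
          _ = (t * t) * g := by
              rw [show t⁻¹ * g⁻¹ * t = (t⁻¹ * g * t)⁻¹ by group, htginv, inv_inv]
      have ht2z : t * t ∈ Subgroup.zpowers c := by rw [← hKc]; exact ht2
      obtain ⟨s, hs⟩ := ht2z
      simp only at hs
      have hinjc : Function.Injective fun m : ℤ => c ^ m :=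
        injective_zpow_iff_not_isOfFinOrder.mpr hcord
      have hcs : c ^ (-s) = c ^ s := by
        calc c ^ (-s) = (t * c * t⁻¹) ^ s := by rw [h, inv_zpow, zpow_neg]
          _ = t * c ^ s * t⁻¹ := by rw [conj_zpow]
          _ = t * (t * t) * t⁻¹ := by rw [hs]
          _ = t * t := by group
          _ = c ^ s := hs.symm
      have hs0 : s = 0 := by
        have := hinjc hcs
        omega
      have htt1 : t * t = 1 := by rw [← hs, hs0, zpow_zero]
      have ht1 : t ≠ 1 := fun hteq => htK (hteq ▸ K.one_mem)
      exact htf t ht1 (isOfFinOrder_iff_pow_eq_one.mpr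
        ⟨2, by norm_num, by rw [pow_two]; exact htt1⟩)
end

section
/- If G is a group whose center has finite index, then the commutator subgroup of G is finite. -/
open scoped commutatorElement

private lemma comm_aux {G : Type*} [Group G] (a b z w : G)
    (hz : ∀ g : G, g * z = z * g) (hw : ∀ g : G, g * w = w * g) :
    ⁅a * z, b * w⁆ = ⁅a, b⁆ := by
  simp only [commutatorElement_def, mul_inv_rev]
  calc a * z * (b * w) * (z⁻¹ * a⁻¹) * (w⁻¹ * b⁻¹)
      = a * (b * w) * z * (z⁻¹ * a⁻¹) * (w⁻¹ * b⁻¹) := by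
        rw [mul_assoc a z, ← hz (b * w)]; group
    _ = a * b * (w * a⁻¹) * (w⁻¹ * b⁻¹) := by group
    _ = a * b * (a⁻¹ * w) * (w⁻¹ * b⁻¹) := by rw [← hw a⁻¹]
    _ = a * b * a⁻¹ * b⁻¹ := by group

/-- Schur's theorem: if the center has finite index, the commutator subgroup is finite. -/
theorem commutator_finite_of_center_finiteIndex (G : Type*) [Group G]
    (h : (Subgroup.center G).FiniteIndex) :
    Finite (commutator G) := by
  have hfin : Finite (G ⧸ Subgroup.center G) :=
    @Subgroup.finite_quotient_of_finiteIndex G _ _ h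
  have hf : Finite (commutatorSet G) := by
    let f : (G ⧸ Subgroup.center G) × (G ⧸ Subgroup.center G) → G := fun p =>
      Quotient.liftOn₂' p.1 p.2 (fun g h => ⁅g, h⁆) (by
        intro a b c d hac hbd
        rw [QuotientGroup.leftRel_apply] at hac hbd
        have hz := Subgroup.mem_center_iff.mp hac
        have hw := Subgroup.mem_center_iff.mp hbd
        have hc : c = a * (a⁻¹ * c) := by group
        have hd : d = b * (b⁻¹ * d) := by group
        conv_rhs => rw [hc, hd]
        exact (comm_aux a b _ _ hz hw).symm)
    have hsub : commutatorSet G ⊆ Set.range f := by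
      rintro x ⟨g, h, rfl⟩
      exact ⟨(QuotientGroup.mk g, QuotientGroup.mk h), rfl⟩
    exact Set.Finite.subset (Set.finite_range f) hsub
  infer_instance
end

section
/- If G is a torsion-free group whose center has finite index, then G is abelian. -/
open scoped commutatorElement

private lemma conj_central_aux {G : Type*} [Group G] (g z : G)
    (hz : z ∈ Subgroup.center G) (x : G) : g * z * x * (g * z)⁻¹ = g * x * g⁻¹ := by
  rw [Subgroup.mem_center_iff] at hz
  rw [mul_inv_rev]
  calc g * z * x * (z⁻¹ * g⁻¹) = g * (z * x * z⁻¹) * g⁻¹ := by group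
    _ = g * x * g⁻¹ := by rw [← hz x, mul_assoc x, mul_inv_cancel, mul_one]

private lemma commutator_central_aux {G : Type*} [Group G] (a b z w : G)
    (hz : z ∈ Subgroup.center G) (hw : w ∈ Subgroup.center G) :
    ⁅a * z, b * w⁆ = ⁅a, b⁆ := by
  have h1 : ⁅a * z, b * w⁆ = ⁅a, b * w⁆ := by
    rw [commutatorElement_def, commutatorElement_def, conj_central_aux a z hz]
  have h2 : ⁅a, b * w⁆ = ⁅a, b⁆ := by
    rw [← commutatorElement_inv, ← commutatorElement_inv b a,
      commutatorElement_def, commutatorElement_def, conj_central_aux b w hw]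
  rw [h1, h2]

/-- A torsion-free group whose center has finite index is abelian. -/
theorem abelian_of_torsionFree_center_finiteIndex (G : Type*) [Group G]
    (htf : Monoid.IsTorsionFree G)
    (h : (Subgroup.center G).FiniteIndex) :
    ∀ a b : G, a * b = b * a := by
  haveI : Finite (G ⧸ Subgroup.center G) :=
    Subgroup.finite_quotient_of_finiteIndex (H := Subgroup.center G)
  -- commutatorSet is finite, since commutators depend only on cosets mod center
  haveI : Finite (commutatorSet G) := by
    let f : (G ⧸ Subgroup.center G) × (G ⧸ Subgroup.center G) → G :=
      fun p => ⁅p.1.out, p.2.out⁆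
    apply Finite.Set.subset (Set.range f)
    rintro x ⟨a, b, rfl⟩
    refine ⟨(↑a, ↑b), ?_⟩
    obtain ⟨z, hza⟩ := QuotientGroup.mk_out_eq_mul (Subgroup.center G) a
    obtain ⟨w, hwb⟩ := QuotientGroup.mk_out_eq_mul (Subgroup.center G) b
    simp only [f, hza, hwb]
    exact commutator_central_aux a b z w z.2 w.2
  haveI : Finite (_root_.commutator G) := inferInstance
  intro a b
  rw [← commutatorElement_eq_one_iff_mul_comm]
  by_contra hne
  have hmem : ⁅a, b⁆ ∈ _root_.commutator G := Subgroup.commutator_mem_commutator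
    (Subgroup.mem_top a) (Subgroup.mem_top b)
  have hfin : IsOfFinOrder (⁅a, b⁆) := by
    have hf : IsOfFinOrder (⟨⁅a, b⁆, hmem⟩ : _root_.commutator G) := isOfFinOrder_of_finite _
    obtain ⟨n, hn, hxn⟩ := (isOfFinOrder_iff_pow_eq_one).mp hf
    exact isOfFinOrder_iff_pow_eq_one.mpr ⟨n, hn, by
      have := congrArg (Subtype.val) hxn
      simpa using this⟩
  exact htf _ hne hfin
end

section
/- In a group G whose center has index n, the number of distinct commutators [g,h] = g⁻¹h⁻¹gh is at most (n-1)² + 1. -/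
section
variable {G : Type*} [Group G]

lemma comm_center_invariant (g h : G) (z w : G) (hz : z ∈ Subgroup.center G)
    (hw : w ∈ Subgroup.center G) :
    (g*z)⁻¹ * (h*w)⁻¹ * (g*z) * (h*w) = g⁻¹ * h⁻¹ * g * h := by
  rw [Subgroup.mem_center_iff] at hz hw
  calc (g*z)⁻¹ * (h*w)⁻¹ * (g*z) * (h*w)
      = z⁻¹ * (g⁻¹ * (w⁻¹ * (h⁻¹ * (g * (z * (h * w)))))) := by group
    _ = z⁻¹ * (g⁻¹ * (w⁻¹ * (h⁻¹ * (g * (h * w * z))))) := by rw [hz (h * w)]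
    _ = z⁻¹ * ((g⁻¹ * (w⁻¹ * (h⁻¹ * (g * (h * w))))) * z) := by group
    _ = z⁻¹ * (z * (g⁻¹ * (w⁻¹ * (h⁻¹ * (g * (h * w)))))) := by
        rw [← hz (g⁻¹ * (w⁻¹ * (h⁻¹ * (g * (h * w)))))]
    _ = g⁻¹ * (w⁻¹ * (h⁻¹ * (g * (h * w)))) := by rw [← mul_assoc, inv_mul_cancel, one_mul]
    _ = g⁻¹ * (w⁻¹ * ((h⁻¹ * (g * h)) * w)) := by group
    _ = g⁻¹ * (w⁻¹ * (w * (h⁻¹ * (g * h)))) := by rw [← hw (h⁻¹ * (g * h))]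
    _ = g⁻¹ * (h⁻¹ * (g * h)) := by rw [← mul_assoc w⁻¹, inv_mul_cancel, one_mul]
    _ = g⁻¹ * h⁻¹ * g * h := by group

end

/-- If the center of `G` has index `n`, then the set of commutators `g⁻¹h⁻¹gh`
has at most `(n-1)² + 1` elements. -/
theorem card_commutators_le (G : Type*) [Group G] (n : ℕ) (hn : n ≠ 0)
    (hidx : (Subgroup.center G).index = n) :
    {x : G | ∃ g h : G, x = g⁻¹ * h⁻¹ * g * h}.Finite ∧
      {x : G | ∃ g h : G, x = g⁻¹ * h⁻¹ * g * h}.ncard ≤ (n - 1) ^ 2 + 1 := by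
  set Z := Subgroup.center G
  have hcardQ : Nat.card (G ⧸ Z) = n := hidx
  have hfinQ : Finite (G ⧸ Z) := Nat.finite_of_card_ne_zero (by rw [hcardQ]; exact hn)
  set f : (G ⧸ Z) × (G ⧸ Z) → G := fun p =>
    p.1.out⁻¹ * p.2.out⁻¹ * p.1.out * p.2.out with hf
  have key : ∀ g h : G, g⁻¹ * h⁻¹ * g * h = f (QuotientGroup.mk g, QuotientGroup.mk h) := by
    intro g h
    obtain ⟨z, hz⟩ := QuotientGroup.mk_out_eq_mul Z g
    obtain ⟨w, hw⟩ := QuotientGroup.mk_out_eq_mul Z h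
    show _ = (QuotientGroup.mk g : G ⧸ Z).out⁻¹ * (QuotientGroup.mk h : G ⧸ Z).out⁻¹ *
      (QuotientGroup.mk g : G ⧸ Z).out * (QuotientGroup.mk h : G ⧸ Z).out
    rw [hz, hw]
    exact (comm_center_invariant g h z w z.2 w.2).symm
  set S := {x : G | ∃ g h : G, x = g⁻¹ * h⁻¹ * g * h} with hS
  have hsub : S ⊆ insert (1:G) (f '' ({x : G ⧸ Z | x ≠ 1} ×ˢ {x : G ⧸ Z | x ≠ 1})) := by
    rintro x ⟨g, h, rfl⟩
    by_cases hg : (QuotientGroup.mk g : G ⧸ Z) = 1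
    · left
      have hgz : g ∈ Z := (QuotientGroup.eq_one_iff g).mp hg
      rw [Subgroup.mem_center_iff] at hgz
      rw [mul_assoc g⁻¹ h⁻¹ g, hgz h⁻¹]
      group
    by_cases hh : (QuotientGroup.mk h : G ⧸ Z) = 1
    · left
      have hhz : h ∈ Z := (QuotientGroup.eq_one_iff h).mp hh
      rw [Subgroup.mem_center_iff] at hhz
      rw [mul_assoc (g⁻¹ * h⁻¹) g h, hhz g]
      group
    · right
      exact ⟨(QuotientGroup.mk g, QuotientGroup.mk h), ⟨hg, hh⟩, (key g h).symm⟩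
  have hfin : S.Finite := Set.Finite.subset (Set.Finite.insert _ ((Set.toFinite _).image f)) hsub
  refine ⟨hfin, ?_⟩
  have h1 : S.ncard ≤ (insert (1:G) (f '' ({x : G ⧸ Z | x ≠ 1} ×ˢ {x : G ⧸ Z | x ≠ 1}))).ncard :=
    Set.ncard_le_ncard hsub (Set.Finite.insert _ ((Set.toFinite _).image f))
  have h2 : (insert (1:G) (f '' ({x : G ⧸ Z | x ≠ 1} ×ˢ {x : G ⧸ Z | x ≠ 1}))).ncard ≤
      (f '' ({x : G ⧸ Z | x ≠ 1} ×ˢ {x : G ⧸ Z | x ≠ 1})).ncard + 1 :=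
    Set.ncard_insert_le _ _
  have h3 : (f '' ({x : G ⧸ Z | x ≠ 1} ×ˢ {x : G ⧸ Z | x ≠ 1})).ncard ≤
      ({x : G ⧸ Z | x ≠ 1} ×ˢ {x : G ⧸ Z | x ≠ 1}).ncard :=
    Set.ncard_image_le (Set.toFinite _)
  have h4 : ({x : G ⧸ Z | x ≠ 1} ×ˢ {x : G ⧸ Z | x ≠ 1}).ncard ≤ (n-1)^2 := by
    have hone : {x : G ⧸ Z | x ≠ 1}.ncard ≤ n - 1 := by
      have heq : {x : G ⧸ Z | x ≠ 1} = Set.univ \ {1} := by ext x; simp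
      rw [heq, Set.ncard_diff_singleton_of_mem (Set.mem_univ 1),
        Set.ncard_univ, hcardQ]
    have hprod : ({x : G ⧸ Z | x ≠ 1} ×ˢ {x : G ⧸ Z | x ≠ 1}).ncard =
        {x : G ⧸ Z | x ≠ 1}.ncard * {x : G ⧸ Z | x ≠ 1}.ncard := by
      simp only [← Nat.card_coe_set_eq]
      rw [
        Nat.card_congr (Equiv.Set.prod _ _), Nat.card_prod]
    rw [hprod, pow_two]
    exact Nat.mul_le_mul hone hone
  omega
end

section
/- If G is a torsion-free virtually cyclic group, then the center of G has finite index in G. -/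
/-- In a torsion-free virtually cyclic group, the center has finite index. -/
theorem center_finiteIndex_of_torsionFree_virtuallyCyclic (G : Type*) [Group G]
    (htf : ∀ g : G, g ≠ 1 → ¬IsOfFinOrder g)
    (H : Subgroup G) (hcyc : IsCyclic H) (hfi : H.FiniteIndex) :
    (Subgroup.center G).FiniteIndex := by
  set N := H.normalCore with hN
  haveI : N.FiniteIndex := H.finiteIndex_normalCore
  haveI hNn : N.Normal := Subgroup.normalCore_normal H
  have hle : N ≤ H := Subgroup.normalCore_le H
  -- N is cyclic
  haveI : IsCyclic (N.subgroupOf H) := Subgroup.isCyclic _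
  haveI : IsCyclic N :=
    isCyclic_of_surjective (Subgroup.subgroupOfEquivOfLe hle).toMonoidHom
      (Subgroup.subgroupOfEquivOfLe hle).surjective
  obtain ⟨b, hb⟩ := IsCyclic.exists_generator (α := N)
  have key : ∀ x, x ∈ N → ∃ k : ℤ, (b : G) ^ k = x := by
    intro x hx
    obtain ⟨k, hk⟩ := hb ⟨x, hx⟩
    exact ⟨k, congrArg Subtype.val hk⟩
  by_cases hb1 : (b : G) = 1
  · -- then N is trivial, so G is finite
    have hbot : N = ⊥ := by
      rw [Subgroup.eq_bot_iff_forall]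
      intro x hx
      obtain ⟨k, hk⟩ := key x hx
      rw [hb1, one_zpow] at hk
      exact hk.symm
    haveI : (⊥ : Subgroup G).FiniteIndex := hbot ▸ ‹N.FiniteIndex›
    have : Nat.card G ≠ 0 := by
      have := ‹(⊥ : Subgroup G).FiniteIndex›.index_ne_zero
      rwa [Subgroup.index_bot] at this
    haveI : Finite G := (Nat.card_ne_zero.mp this).2
    infer_instance
  · have hord : ¬ IsOfFinOrder (b : G) := htf _ hb1
    have hinj : Function.Injective fun n : ℤ => (b : G) ^ n :=
      injective_zpow_iff_not_isOfFinOrder.mpr hord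
    -- b is central
    have hcen : (b : G) ∈ Subgroup.center G := by
      rw [Subgroup.mem_center_iff]
      intro g
      have h1 : g * (b : G) * g⁻¹ ∈ N := hNn.conj_mem _ b.2 g
      have h2 : g⁻¹ * (b : G) * g⁻¹⁻¹ ∈ N := hNn.conj_mem _ b.2 g⁻¹
      obtain ⟨k, hk⟩ := key _ h1
      obtain ⟨m, hm⟩ := key _ h2
      rw [inv_inv] at hm
      have hmk : (b : G) ^ (k * m) = (b : G) ^ (1 : ℤ) := by
        rw [zpow_one, zpow_mul, hk, conj_zpow, hm]
        group
      have hmk1 : k * m = 1 := hinj hmk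
      have hk1 : k = 1 ∨ k = -1 := Int.isUnit_iff.mp (IsUnit.of_mul_eq_one _ hmk1)
      rcases hk1 with hk1 | hk1
      · rw [hk1, zpow_one] at hk
        exact mul_inv_eq_iff_eq_mul.mp hk.symm
      · -- inversion case: contradiction
        exfalso
        rw [hk1] at hk
        set n := N.index with hn
        have hn0 : n ≠ 0 := ‹N.FiniteIndex›.index_ne_zero
        obtain ⟨t, ht⟩ := key _ (N.pow_index_mem g)
        have hconj : g * (b : G) ^ t * g⁻¹ = (b : G) ^ (-t) := by
          rw [← conj_zpow, ← hk, ← zpow_mul, neg_one_mul]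
        rw [ht] at hconj
        have : g * g ^ n * g⁻¹ = g ^ n := by group
        rw [this, ← ht] at hconj
        have ht0 : t = -t := hinj hconj
        have ht0' : t = 0 := by omega
        rw [ht0', zpow_zero] at ht
        have hg1 : g = 1 := by
          by_contra hg
          exact htf g hg (isOfFinOrder_iff_pow_eq_one.mpr
            ⟨n, Nat.pos_of_ne_zero hn0, ht.symm⟩)
        rw [hg1] at hk
        simp only [one_mul, inv_one, mul_one, zpow_neg_one] at hk
        have hb2 : (b : G) ^ (2 : ℕ) = 1 := by
          rw [pow_two]
          nth_rewrite 1 [← hk]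
          simp
        exact hord (isOfFinOrder_iff_pow_eq_one.mpr ⟨2, two_pos, hb2⟩)
  -- conclude
    have hle2 : N ≤ Subgroup.center G := by
      intro x hx
      obtain ⟨k, hk⟩ := key x hx
      exact hk ▸ Subgroup.zpow_mem _ hcen k
    exact Subgroup.finiteIndex_of_le hle2
end

section
/- If G is a torsion-free group in which the centralizer of every nontrivial element is cyclic, then G is a CSA-group, i.e., every maximal abelian subgroup A of G is malnormal: A ∩ gAg⁻¹ = {1} for every g ∈ G \ A. -/
section Aux

variable {G : Type*} [Group G]

lemma aux_tf_ne {g : G} (htf : ∀ g : G, g ≠ 1 → ¬IsOfFinOrder g) (hg : g ≠ 1) {n : ℤ} (hn : n ≠ 0)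
    (h : g ^ n = 1) : False := by
  refine htf g hg ?_
  rw [isOfFinOrder_iff_pow_eq_one]
  refine ⟨n.natAbs, Int.natAbs_pos.mpr hn, ?_⟩
  rcases Int.natAbs_eq n with he | he
  · rw [← zpow_natCast, ← he, h]
  · have : g ^ (n.natAbs : ℤ) = 1 := by
      rw [show (n.natAbs : ℤ) = -n from by omega, zpow_neg, h, inv_one]
    rwa [zpow_natCast] at this
end Aux

/-- If `G` is torsion-free and the centralizer of every nontrivial element is cyclic,
then every maximal abelian subgroup of `G` is malnormal (`G` is CSA). -/
theorem csa_of_torsionFree_cyclic_centralizers (G : Type*) [Group G]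
    (htf : ∀ g : G, g ≠ 1 → ¬IsOfFinOrder g)
    (hcent : ∀ x : G, x ≠ 1 → IsCyclic (Subgroup.centralizer {x}))
    (A : Subgroup G) (hA : IsMulCommutative A)
    (hmax : ∀ B : Subgroup G, IsMulCommutative B → A ≤ B → B = A) :
    ∀ g : G, g ∉ A → A ⊓ Subgroup.map ((MulAut.conj g).toMonoidHom) A = ⊥ := by
  -- centralizers of nontrivial elements are commutative
  have hcomm : ∀ x : G, x ≠ 1 → IsMulCommutative (Subgroup.centralizer {x} : Subgroup G) := by
    intro x hx
    letI := (hcent x hx).commGroup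
    exact ⟨⟨fun a b => mul_comm a b⟩⟩
  -- centralizer of a nontrivial element of A equals A
  have hCA : ∀ x : G, x ∈ A → x ≠ 1 → Subgroup.centralizer {x} = A := by
    intro x hxA hx
    refine hmax _ (hcomm x hx) ?_
    intro a ha
    rw [Subgroup.mem_centralizer_singleton_iff]
    exact Subgroup.mul_comm_of_mem_isMulCommutative A ha hxA
  intro g hg
  rw [eq_bot_iff]
  intro x hx
  by_contra hxne
  simp only [Subgroup.mem_bot] at hxne
  obtain ⟨hxA, b, hbA, hbx⟩ := hx
  simp only [MulEquiv.toMonoidHom_eq_coe, MonoidHom.coe_coe, MulAut.conj_apply] at hbx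
  have hxA : x ∈ A := hxA
  have hbA : b ∈ A := hbA
  have hb1 : b ≠ 1 := by rintro rfl; simp at hbx; exact hxne hbx.symm
  have hCx : Subgroup.centralizer {x} = A := hCA x hxA hxne
  have hCb : Subgroup.centralizer {b} = A := hCA b hbA hb1
  have h1 : ∀ y : G, y ∈ A ↔ y * x = x * y := fun y => by
    rw [← hCx, Subgroup.mem_centralizer_singleton_iff]
  have h2 : ∀ y : G, y ∈ A ↔ y * b = b * y := fun y => by
    rw [← hCb, Subgroup.mem_centralizer_singleton_iff]
  -- conjugation by g preserves A
  have hmap : ∀ y : G, y ∈ A ↔ g⁻¹ * y * g ∈ A := by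
    intro y
    rw [h1 y, h2 (g⁻¹ * y * g), ← hbx]
    constructor
    · intro h
      calc (g⁻¹ * y * g) * b = g⁻¹ * (y * (g * b * g⁻¹)) * g := by group
        _ = g⁻¹ * ((g * b * g⁻¹) * y) * g := by rw [h]
        _ = b * (g⁻¹ * y * g) := by group
    · intro h
      calc y * (g * b * g⁻¹) = g * ((g⁻¹ * y * g) * b) * g⁻¹ := by group
        _ = g * (b * (g⁻¹ * y * g)) * g⁻¹ := by rw [h]
        _ = (g * b * g⁻¹) * y := by group
  -- cyclic generator of A
  obtain ⟨c', hc'⟩ := (hcent x hxne).exists_generator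
  set c : G := (c' : G) with hc
  have hcA : c ∈ A := hCx ▸ c'.2
  have hgen : ∀ y : G, y ∈ A → ∃ n : ℤ, y = c ^ n := by
    intro y hy
    obtain ⟨n, hn⟩ := hc' ⟨y, hCx ▸ hy⟩
    exact ⟨n, by simpa [hc] using congrArg (Subtype.val) hn.symm⟩
  have hc1 : c ≠ 1 := by
    rintro h
    obtain ⟨n, hn⟩ := hgen x hxA
    exact hxne (by simp [hn, h])
  -- conjugates of c
  obtain ⟨j, hj⟩ := hgen (g * c * g⁻¹)
    (by rw [hmap, show g⁻¹ * (g * c * g⁻¹) * g = c from by group]; exact hcA)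
  obtain ⟨k, hk⟩ := hgen (g⁻¹ * c * g) ((hmap c).mp hcA)
  have hkj : c ^ (k * j) = c := by
    have key : g⁻¹ * (g * c * g⁻¹) * g = c := by group
    rw [hj] at key
    calc c ^ (k * j) = (c ^ k) ^ j := by rw [zpow_mul]
      _ = (g⁻¹ * c * (g⁻¹)⁻¹) ^ j := by rw [inv_inv, hk]
      _ = g⁻¹ * c ^ j * (g⁻¹)⁻¹ := conj_zpow
      _ = c := by rw [inv_inv]; exact key
  have hkj1 : k * j = 1 := by
    by_contra h
    have : c ^ (k * j - 1) = 1 := by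
      rw [zpow_sub, hkj, zpow_one, mul_inv_cancel]
    exact aux_tf_ne htf hc1 (by omega) this
  have hCc : Subgroup.centralizer {c} = A := hCA c hcA hc1
  have hmemc : ∀ y : G, y ∈ A ↔ y * c = c * y := fun y => by
    rw [← hCc, Subgroup.mem_centralizer_singleton_iff]
  rcases Int.mul_eq_one_iff_eq_one_or_neg_one.mp hkj1 with ⟨hk1, hj1⟩ | ⟨hk1, hj1⟩
  · -- j = 1 : g commutes with c, so g ∈ A
    rw [hj1, zpow_one] at hj
    exact hg ((hmemc g).mpr (by rwa [mul_inv_eq_iff_eq_mul] at hj))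
  · -- j = -1 : g² commutes with c
    rw [hj1] at hj
    have hgg : (g * g) * c = c * (g * g) := by
      have : g * (g * c * g⁻¹) * g⁻¹ = g * c ^ (-1 : ℤ) * g⁻¹ := by rw [hj]
      rw [hj] at this
      have h2 : g * c ^ (-1 : ℤ) * g⁻¹ = c := by
        have := congrArg (fun t => g * t * g⁻¹) hj
        calc g * c ^ (-1 : ℤ) * g⁻¹ = g * (g * c * g⁻¹) * g⁻¹ := by rw [hj]
          _ = g * (g * c * g⁻¹) * g⁻¹ := rfl
          _ = c := by
              have h3 : g * (g * c * g⁻¹) * g⁻¹ = c := by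
                have h4 : g * c * g⁻¹ = c⁻¹ := by rw [hj]; group
                rw [h4]
                have h5 : g * c⁻¹ * g⁻¹ = (g * c * g⁻¹)⁻¹ := by group
                rw [h5, h4, inv_inv]
              exact h3
      have h6 : g * (g * c * g⁻¹) * g⁻¹ = c := by
        calc g * (g * c * g⁻¹) * g⁻¹ = g * c ^ (-1:ℤ) * g⁻¹ := by rw [hj]
          _ = c := h2
      calc (g * g) * c = (g * (g * c * g⁻¹) * g⁻¹) * (g * g) := by group
        _ = c * (g * g) := by rw [h6]
    have hg1 : g ≠ 1 := fun h => hg (h ▸ A.one_mem)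
    have hgg1 : g * g ≠ 1 := by
      intro h
      exact aux_tf_ne htf hg1 (two_ne_zero) (by rw [show (2:ℤ) = 1 + 1 from rfl, zpow_add, zpow_one, h])
    letI := hcomm (g * g) hgg1
    have hgmem : g ∈ Subgroup.centralizer {g * g} := by
      rw [Subgroup.mem_centralizer_singleton_iff]; group
    have hcmem : c ∈ Subgroup.centralizer {g * g} := by
      rw [Subgroup.mem_centralizer_singleton_iff]; exact hgg.symm
    have : g * c = c * g :=
      Subgroup.mul_comm_of_mem_isMulCommutative (Subgroup.centralizer {g * g}) hgmem hcmem
    exact hg ((hmemc g).mpr this)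
end

section
/- If G is a nonabelian CSA-group, then G has no element of order 2. -/
/-- Every commutative subgroup is contained in a maximal commutative subgroup. -/
lemma exists_maximal_comm_above {G : Type*} [Group G] (K : Subgroup G)
    (hK : IsMulCommutative K) :
    ∃ M : Subgroup G, K ≤ M ∧ IsMulCommutative M ∧
      ∀ B : Subgroup G, IsMulCommutative B → M ≤ B → B = M := by
  have hub : ∀ c ⊆ {A : Subgroup G | IsMulCommutative A}, IsChain (· ≤ ·) c →
      ∀ y ∈ c, ∃ ub ∈ {A : Subgroup G | IsMulCommutative A}, ∀ z ∈ c, z ≤ ub := by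
    intro c hcs hc y hy
    refine ⟨sSup c, ?_, fun z hz => le_sSup hz⟩
    have hdir : DirectedOn (· ≤ ·) c := hc.directedOn
    constructor
    constructor
    rintro ⟨a, ha⟩ ⟨b, hb⟩
    have ha' := (Subgroup.mem_sSup_of_directedOn ⟨y, hy⟩ hdir).1 ha
    have hb' := (Subgroup.mem_sSup_of_directedOn ⟨y, hy⟩ hdir).1 hb
    obtain ⟨A, hAc, haA⟩ := ha'
    obtain ⟨B, hBc, hbB⟩ := hb'
    obtain ⟨C, hCc, hAC, hBC⟩ := hdir A hAc B hBc
    have hC : IsMulCommutative C := hcs hCc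
    have : a * b = b * a := by
      haveI := hC
      exact Subgroup.mul_comm_of_mem_isMulCommutative C (hAC haA) (hBC hbB)
    exact Subtype.ext this
  obtain ⟨M, hKM, hMs, hMmax⟩ := zorn_le_nonempty₀ _ hub K hK
  exact ⟨M, hKM, hMs, fun B hB hMB => le_antisymm (hMmax hB hMB) hMB⟩

/-- A nonabelian CSA-group has no element of order 2. -/
theorem csa_nonabelian_no_involution (G : Type*) [Group G]
    (hCSA : ∀ A : Subgroup G, IsMulCommutative A →
      (∀ B : Subgroup G, IsMulCommutative B → A ≤ B → B = A) →
      ∀ g : G, g ∉ A → A ⊓ Subgroup.map ((MulAut.conj g).toMonoidHom) A = ⊥)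
    (hna : ¬ ∀ a b : G, a * b = b * a) :
    ¬ ∃ g : G, orderOf g = 2 := by
  rintro ⟨i, hi⟩
  have hi1 : i ≠ 1 := by
    intro h; rw [h, orderOf_one] at hi; omega
  have hii : i * i = 1 := by
    have := pow_orderOf_eq_one i
    rwa [hi, pow_two] at this
  have hinv : i⁻¹ = i := by
    rw [eq_comm, eq_inv_iff_mul_eq_one]; exact hii
  -- membership in conjugate subgroup
  have memconj : ∀ (A : Subgroup G) (g x : G), x ∈ A →
      g * x * g⁻¹ ∈ Subgroup.map ((MulAut.conj g).toMonoidHom) A := by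
    intro A g x hx
    exact ⟨x, hx, rfl⟩
  -- maximal abelian subgroup containing i
  obtain ⟨M, hiM, hMcomm, hMmax⟩ :=
    exists_maximal_comm_above (Subgroup.zpowers i) ⟨⟨fun a b => by
      obtain ⟨m, hm⟩ := a.2
      obtain ⟨n, hn⟩ := b.2
      apply Subtype.ext
      show (a : G) * b = b * a
      rw [← hm, ← hn, ← zpow_add, ← zpow_add, add_comm]⟩⟩
  have hiM' : i ∈ M := hiM (Subgroup.mem_zpowers i)
  haveI := hMcomm
  -- claim: every g is in M
  have hall : ∀ g : G, g ∈ M := by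
    intro g
    by_contra hg
    have hbot := hCSA M hMcomm hMmax g hg
    -- x = g i g⁻¹ * i
    set x : G := g * i * g⁻¹ * i with hx
    by_cases hx1 : x = 1
    · -- then g i g⁻¹ = i ∈ M ⊓ gMg⁻¹, contradiction
      have hgi : g * i * g⁻¹ = i := by
        have : g * i * g⁻¹ = x * i⁻¹ := by rw [hx]; group
        rw [this, hx1, one_mul, hinv]
      have : i ∈ M ⊓ Subgroup.map ((MulAut.conj g).toMonoidHom) M :=
        ⟨hiM', hgi ▸ memconj M g i hiM'⟩
      rw [hbot] at this
      exact hi1 this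
    · -- i inverts x
      have hixi : i * x * i⁻¹ = x⁻¹ := by
        rw [hinv, hx]
        have h2 : i * i = 1 := hii
        calc i * (g * i * g⁻¹ * i) * i
            = i * g * i * g⁻¹ * (i * i) := by group
          _ = i * g * i * g⁻¹ := by rw [h2, mul_one]
          _ = i⁻¹ * g * i⁻¹ * g⁻¹ := by rw [hinv]
          _ = (g * i * g⁻¹ * i)⁻¹ := by group
      -- B maximal abelian containing x
      obtain ⟨B, hxB, hBcomm, hBmax⟩ :=
        exists_maximal_comm_above (Subgroup.zpowers x) ⟨⟨fun a b => by
          obtain ⟨m, hm⟩ := a.2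
          obtain ⟨n, hn⟩ := b.2
          apply Subtype.ext
          show (a : G) * b = b * a
          rw [← hm, ← hn, ← zpow_add, ← zpow_add, add_comm]⟩⟩
      have hxB' : x ∈ B := hxB (Subgroup.mem_zpowers x)
      haveI := hBcomm
      -- i ∈ B
      have hiB : i ∈ B := by
        by_contra hiB
        have hbotB := hCSA B hBcomm hBmax i hiB
        have : x⁻¹ ∈ B ⊓ Subgroup.map ((MulAut.conj i).toMonoidHom) B :=
          ⟨B.inv_mem hxB', hixi ▸ memconj B i x hxB'⟩
        rw [hbotB] at this
        exact hx1 (inv_eq_one.1 (Subgroup.mem_bot.1 this))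
      -- M ≤ B
      have hMB : M ≤ B := by
        intro m hm
        by_contra hmB
        have hbotB := hCSA B hBcomm hBmax m hmB
        have hmi : m * i * m⁻¹ = i := by
          rw [Subgroup.mul_comm_of_mem_isMulCommutative M hm hiM']
          group
        have : i ∈ B ⊓ Subgroup.map ((MulAut.conj m).toMonoidHom) B :=
          ⟨hiB, hmi ▸ memconj B m i hiB⟩
        rw [hbotB] at this
        exact hi1 this
      have hBM : B = M := hMmax B hBcomm hMB
      -- so x ∈ M, hence g i g⁻¹ ∈ M ⊓ gMg⁻¹
      have hxM : x ∈ M := hBM ▸ hxB'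
      have hgigM : g * i * g⁻¹ ∈ M := by
        have : g * i * g⁻¹ = x * i⁻¹ := by rw [hx]; group
        rw [this, hinv]
        exact M.mul_mem hxM hiM'
      have hmem : g * i * g⁻¹ ∈ M ⊓ Subgroup.map ((MulAut.conj g).toMonoidHom) M :=
        ⟨hgigM, memconj M g i hiM'⟩
      rw [hbot] at hmem
      have : i = 1 := by
        have h1 : g * i * g⁻¹ = 1 := hmem
        have := congrArg (fun y => g⁻¹ * y * g) h1
        simpa [mul_assoc] using this
      exact hi1 this
  exact hna fun a b => Subgroup.mul_comm_of_mem_isMulCommutative M (hall a) (hall b)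
end

section
/- Let G be a torsion-free group in which every nontrivial element has cyclic centralizer, let A be a maximal abelian subgroup of G with generator a, and let b ∈ G satisfy A ∩ bAb⁻¹ ≠ {1}. Then b ∈ A. -/
/-- Key malnormality step: if `G` is torsion-free with cyclic centralizers of
nontrivial elements, `A = ⟨a⟩` is a maximal abelian subgroup, and
`A ∩ bAb⁻¹ ≠ {1}`, then `b ∈ A`. -/
theorem mem_of_inter_conj_ne_bot (G : Type*) [Group G]
    (htf : ∀ g : G, g ≠ 1 → ¬IsOfFinOrder g)
    (hcent : ∀ x : G, x ≠ 1 → IsCyclic (Subgroup.centralizer {x}))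
    (A : Subgroup G) (a : G) (hAa : A = Subgroup.zpowers a)
    (hA : IsMulCommutative A)
    (hmax : ∀ B : Subgroup G, IsMulCommutative B → A ≤ B → B = A)
    (b : G) (hb : A ⊓ Subgroup.map ((MulAut.conj b).toMonoidHom) A ≠ ⊥) :
    b ∈ A := by
  classical
  have haA : a ∈ A := hAa ▸ Subgroup.mem_zpowers a
  have ha1 : a ≠ 1 := by
    rintro rfl
    apply hb
    have : A = ⊥ := by rw [hAa, Subgroup.zpowers_one_eq_bot]
    rw [this, bot_inf_eq]
  have hinj : Function.Injective fun n : ℤ => a ^ n :=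
    injective_zpow_iff_not_isOfFinOrder.mpr (htf a ha1)
  have key : ∀ y : G, y ≠ 1 → a ∈ Subgroup.centralizer {y} →
      Subgroup.centralizer {y} = A := by
    intro y hy hay
    have hcyc := hcent y hy
    have hcomm : IsMulCommutative (Subgroup.centralizer ({y} : Set G)) := by
      constructor; constructor
      intro u v
      obtain ⟨c, hc⟩ := hcyc.exists_generator
      obtain ⟨m, hm⟩ := hc u
      obtain ⟨n, hn⟩ := hc v
      rw [← hm, ← hn, ← zpow_add, ← zpow_add, add_comm]
    exact hmax _ hcomm (hAa ▸ Subgroup.zpowers_le.mpr hay)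
  have hAcomm : ∀ u v : G, u ∈ A → v ∈ A → u * v = v * u := by
    intro u v hu hv
    have := hA.is_comm.comm ⟨u, hu⟩ ⟨v, hv⟩
    exact congrArg Subtype.val this
  have keyA : ∀ y : G, y ≠ 1 → y ∈ A → Subgroup.centralizer {y} = A := by
    intro y hy hyA
    exact key y hy (Subgroup.mem_centralizer_singleton_iff.mpr (hAcomm a y haA hyA))
  have step : ∀ g : G, (A ⊓ Subgroup.map ((MulAut.conj g).toMonoidHom) A ≠ ⊥) →
      g * a * g⁻¹ ∈ A := by
    intro g hg
    obtain ⟨⟨x, hx⟩, hx1⟩ := Subgroup.ne_bot_iff_exists_ne_one.mp hg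
    have hx1' : x ≠ 1 := fun h => hx1 (Subtype.ext h)
    obtain ⟨hxA, hxC⟩ := hx
    obtain ⟨y, hyA, hyx⟩ := hxC
    have hyx' : g * y * g⁻¹ = x := hyx
    have hCx : Subgroup.centralizer {x} = A := keyA x hx1' hxA
    rw [← hCx, Subgroup.mem_centralizer_singleton_iff, ← hyx']
    have h1 : a * y = y * a := hAcomm a y haA hyA
    calc (g * a * g⁻¹) * (g * y * g⁻¹) = g * (a * y) * g⁻¹ := by group
    _ = g * (y * a) * g⁻¹ := by rw [h1]
    _ = (g * y * g⁻¹) * (g * a * g⁻¹) := by group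
  have hbab : b * a * b⁻¹ ∈ A := step b hb
  rw [hAa] at hbab
  obtain ⟨k, hk⟩ := hbab
  have hk' : b * a * b⁻¹ = a ^ k := hk.symm
  have hakA : a ^ k ∈ A := hAa ▸ Subgroup.zpow_mem _ (Subgroup.mem_zpowers a) k
  have hbinv : A ⊓ Subgroup.map ((MulAut.conj b⁻¹).toMonoidHom) A ≠ ⊥ := by
    apply Subgroup.ne_bot_iff_exists_ne_one.mpr
    refine ⟨⟨a, haA, ⟨a ^ k, hakA, ?_⟩⟩, fun h => ha1 (congrArg Subtype.val h)⟩
    simp only [MulEquiv.coe_toMonoidHom, MulAut.conj_apply]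
    rw [← hk']
    group
  have hbab' : b⁻¹ * a * b⁻¹⁻¹ ∈ A := step b⁻¹ hbinv
  rw [hAa] at hbab'
  obtain ⟨j, hj⟩ := hbab'
  have hj' : b⁻¹ * a * b = a ^ j := by
    have h := hj.symm
    rwa [inv_inv] at h
  have hkj : a ^ (k * j) = a ^ (1 : ℤ) := by
    calc a ^ (k * j) = (a ^ k) ^ j := by rw [zpow_mul]
    _ = (b * a * b⁻¹) ^ j := by rw [hk']
    _ = b * a ^ j * b⁻¹ := conj_zpow
    _ = b * (b⁻¹ * a * b) * b⁻¹ := by rw [hj']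
    _ = a := by group
    _ = a ^ (1 : ℤ) := (zpow_one a).symm
  have hkj1 : k * j = 1 := hinj hkj
  have hku : k = 1 ∨ k = -1 := Int.isUnit_iff.mp (IsUnit.of_mul_eq_one j hkj1)
  have hCa : Subgroup.centralizer {a} = A := keyA a ha1 haA
  rcases hku with hk1 | hkm1
  · rw [← hCa, Subgroup.mem_centralizer_singleton_iff]
    rw [hk1, zpow_one] at hk'
    calc b * a = (b * a * b⁻¹) * b := by group
    _ = a * b := by rw [hk']
  · rw [hkm1, zpow_neg_one] at hk'
    have hstep : b * a⁻¹ * b⁻¹ = a := by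
      have h2 : b * a⁻¹ * b⁻¹ = (b * a * b⁻¹)⁻¹ := by group
      rw [h2, hk', inv_inv]
    have hb2 : (b * b) * a * (b * b)⁻¹ = a := by
      calc (b * b) * a * (b * b)⁻¹ = b * (b * a * b⁻¹) * b⁻¹ := by group
      _ = b * a⁻¹ * b⁻¹ := by rw [hk']
      _ = a := hstep
    have hb2A : b * b ∈ A := by
      rw [← hCa, Subgroup.mem_centralizer_singleton_iff]
      calc (b * b) * a = ((b * b) * a * (b * b)⁻¹) * (b * b) := by group
      _ = a * (b * b) := by rw [hb2]
    rw [hAa] at hb2A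
    obtain ⟨m, hm⟩ := hb2A
    have hm' : a ^ m = b * b := hm
    rcases eq_or_ne m 0 with hm0 | hm0
    · rw [hm0, zpow_zero] at hm'
      have hbfin : IsOfFinOrder b := by
        apply isOfFinOrder_iff_pow_eq_one.mpr
        exact ⟨2, by norm_num, by rw [pow_two]; exact hm'.symm⟩
      by_cases hb1 : b = 1
      · rw [hb1]; exact A.one_mem
      · exact absurd hbfin (htf b hb1)
    · have ham1 : a ^ m ≠ 1 := fun h => hm0 (hinj (h.trans (zpow_zero a).symm))
      have hamA : a ^ m ∈ A := hAa ▸ Subgroup.zpow_mem _ (Subgroup.mem_zpowers a) m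
      have hCam : Subgroup.centralizer {a ^ m} = A := keyA (a ^ m) ham1 hamA
      rw [← hCam, Subgroup.mem_centralizer_singleton_iff, hm']
      group
end
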